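/- Let F be the Kripke frame with exactly three worlds x0, x1, y and accessibility relation R = {(x0,x0),(x1,x1),(y,y),(x0,x1),(x1,x0),(x0,y),(x1,y)} (a two-element cluster {x0,x1} below a final world y). For every modal formula φ with v⁺(φ)⊆{p} and v⁻(φ)=∅ (p a fixed propositional variable), there exists a formula ψ among ⊥, □p, p∧□◇p, □◇p, p, p∨□◇p, ◇p, ⊤ such that φ↔ψ is satisfied at every world of every Kripke model based on F. -/

import Mathlib

/-- Modal formulas over countably many variables. -/
inductive ModalForm : Type where
  | var : ℕ → ModalForm
  | bot : ModalForm
  | and : ModalForm → ModalForm → ModalForm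
  | or : ModalForm → ModalForm → ModalForm
  | not : ModalForm → ModalForm
  | imp : ModalForm → ModalForm → ModalForm
  | box : ModalForm → ModalForm

namespace ModalForm

mutual
  /-- positively occurring variables -/
  def vpos : ModalForm → Finset ℕ
    | var p => {p}
    | bot => ∅
    | and φ ψ => vpos φ ∪ vpos ψ
    | or φ ψ => vpos φ ∪ vpos ψ
    | not φ => vneg φ
    | imp φ ψ => vneg φ ∪ vpos ψ
    | box φ => vpos φ
  /-- negatively occurring variables -/
  def vneg : ModalForm → Finset ℕ
    | var _ => ∅
    | bot => ∅
    | and φ ψ => vneg φ ∪ vneg ψ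
    | or φ ψ => vneg φ ∪ vneg ψ
    | not φ => vpos φ
    | imp φ ψ => vpos φ ∪ vneg ψ
    | box φ => vneg φ
end

/-- Modal depth: maximal nesting of `□`. -/
def depth : ModalForm → ℕ
  | var _ => 0
  | bot => 0
  | and φ ψ => max (depth φ) (depth ψ)
  | or φ ψ => max (depth φ) (depth ψ)
  | not φ => depth φ
  | imp φ ψ => max (depth φ) (depth ψ)
  | box φ => depth φ + 1

/-- `◇φ := ¬□¬φ` -/
def dia (φ : ModalForm) : ModalForm := not (box (not φ))

/-- `⊤ := ¬⊥` -/
def top : ModalForm := not bot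

end ModalForm

/-- An S4 Kripke frame: nonempty set of worlds with a reflexive transitive relation. -/
structure KFrame : Type 1 where
  W : Type
  R : W → W → Prop
  nonempty : Nonempty W
  refl : ∀ x, R x x
  trans : ∀ x y z, R x y → R y z → R x z

/-- A Kripke model: a frame with a valuation. -/
structure KModel : Type 1 extends KFrame where
  val : W → ℕ → Prop

/-- The model based on frame `F` with valuation `V`. -/
def KFrame.toModel (F : KFrame) (V : F.W → ℕ → Prop) : KModel :=
  { toKFrame := F, val := V }

/-- Satisfaction in a Kripke model. -/
def KModel.Sat (M : KModel) : M.W → ModalForm → Prop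
  | w, .var p => M.val w p
  | _, .bot => False
  | w, .and φ ψ => M.Sat w φ ∧ M.Sat w ψ
  | w, .or φ ψ => M.Sat w φ ∨ M.Sat w ψ
  | w, .not φ => ¬ M.Sat w φ
  | w, .imp φ ψ => M.Sat w φ → M.Sat w ψ
  | w, .box φ => ∀ y, M.R w y → M.Sat y φ

/-- `(M0,w0) →ₙ^{(P⁺,P⁻)} (M1,w1)`: every `(P⁺,P⁻)`-formula of depth ≤ n
satisfied at `(M0,w0)` is satisfied at `(M1,w1)`. -/
def ModalArrow (Pp Pm : Finset ℕ) (n : ℕ) (M0 : KModel) (w0 : M0.W)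
    (M1 : KModel) (w1 : M1.W) : Prop :=
  ∀ φ : ModalForm, φ.vpos ⊆ Pp → φ.vneg ⊆ Pm → φ.depth ≤ n →
    M0.Sat w0 φ → M1.Sat w1 φ

/-- p-morphism between frames. -/
def PMorphism (F G : KFrame) (f : F.W → G.W) : Prop :=
  (∀ x y, F.R x y → G.R (f x) (f y)) ∧
  (∀ x w, G.R (f x) w → ∃ z, F.R x z ∧ f z = w)

/-- The class `C` of Kripke models enjoys `n`-IP. -/
def EnjoysIP (C : Set KModel) (n : ℕ) : Prop :=
  ∀ (Pp Pm : Finset ℕ) (M0 M1 : KModel), M0 ∈ C → M1 ∈ C →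
    ∀ (w0 : M0.W) (w1 : M1.W), ModalArrow Pp Pm n M0 w0 M1 w1 →
      ∃ (F : KFrame) (wstar : F.W) (f0 : F.W → M0.W) (f1 : F.W → M1.W),
        (∀ V : F.W → ℕ → Prop, F.toModel V ∈ C) ∧
        PMorphism F M0.toKFrame f0 ∧
        PMorphism F M1.toKFrame f1 ∧
        f0 wstar = w0 ∧ f1 wstar = w1 ∧
        ∀ x : F.W, ModalArrow Pp Pm 0 M0 (f0 x) M1 (f1 x)

/-- A world is final iff every successor is also a predecessor. -/
def KModel.Final (M : KModel) (w : M.W) : Prop := ∀ y, M.R w y → M.R y w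

/-- The cluster of a world. -/
def KModel.cluster (M : KModel) (w : M.W) : Set M.W := {u | M.R w u ∧ M.R u w}

/-- Cluster `C0` of `M0` matches cluster `C1` of `M1`. -/
def Matches (Pp Pm : Finset ℕ) (M0 M1 : KModel) (C0 : Set M0.W) (C1 : Set M1.W) : Prop :=
  (∀ u0 ∈ C0, ∃ u1 ∈ C1, ModalArrow Pp Pm 0 M0 u0 M1 u1) ∧
  (∀ u1 ∈ C1, ∃ u0 ∈ C0, ModalArrow Pp Pm 0 M0 u0 M1 u1)

/-- `φ` is satisfied at every world of every model in `C`. -/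
def ValidOn (C : Set KModel) (φ : ModalForm) : Prop :=
  ∀ M ∈ C, ∀ w : M.W, M.Sat w φ

/-- The frame of Γ(LS,1,2): a two-element cluster `{0,1}` below a final world `2`. -/
def LS12Frame : KFrame where
  W := Fin 3
  R := fun a b => a = b ∨ a.val ≤ 1
  nonempty := ⟨0⟩
  refl := fun _ => Or.inl rfl
  trans := fun x y z hxy hyz => by
    rcases hxy with rfl | h
    · exact hyz
    · exact Or.inr h


/-! ### Auxiliary machinery -/

abbrev SemFun := Bool → Bool → Bool → Fin 3 → Bool

/-- Truth function of a formula on the frame `LS12Frame`, as a function of the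
truth values `a b c` of the (single) variable at the three worlds. -/
def psem : ModalForm → SemFun
  | .var _ => fun a b c w => if w = 0 then a else if w = 1 then b else c
  | .bot => fun _ _ _ _ => false
  | .and φ ψ => fun a b c w => psem φ a b c w && psem ψ a b c w
  | .or φ ψ => fun a b c w => psem φ a b c w || psem ψ a b c w
  | .not φ => fun a b c w => !(psem φ a b c w)
  | .imp φ ψ => fun a b c w => !(psem φ a b c w) || psem ψ a b c w
  | .box φ => fun a b c w =>
      if w.val ≤ 1 then psem φ a b c 0 && psem φ a b c 1 && psem φ a b c 2
      else psem φ a b c 2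

def cand (p : ℕ) : List ModalForm :=
  [ModalForm.bot,
   ModalForm.box (ModalForm.var p),
   ModalForm.and (ModalForm.var p) (ModalForm.box (ModalForm.dia (ModalForm.var p))),
   ModalForm.box (ModalForm.dia (ModalForm.var p)),
   ModalForm.var p,
   ModalForm.or (ModalForm.var p) (ModalForm.box (ModalForm.dia (ModalForm.var p))),
   ModalForm.dia (ModalForm.var p),
   ModalForm.top]

def Spos : List SemFun := (cand 0).map psem

def Sneg : List SemFun := Spos.map (fun f => fun a b c w => !(f a b c w))

set_option maxRecDepth 100000

lemma map_cand (p : ℕ) : (cand p).map psem = Spos := rfl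

lemma var_mem : psem (ModalForm.var 0) ∈ Spos := by decide
lemma bot_memP : psem ModalForm.bot ∈ Spos := by decide
lemma bot_memN : psem ModalForm.bot ∈ Sneg := by decide
lemma and_closP : ∀ f ∈ Spos, ∀ g ∈ Spos,
    (fun a b c w => f a b c w && g a b c w) ∈ Spos := by decide
lemma and_closN : ∀ f ∈ Sneg, ∀ g ∈ Sneg,
    (fun a b c w => f a b c w && g a b c w) ∈ Sneg := by decide
lemma or_closP : ∀ f ∈ Spos, ∀ g ∈ Spos,
    (fun a b c w => f a b c w || g a b c w) ∈ Spos := by decide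
lemma or_closN : ∀ f ∈ Sneg, ∀ g ∈ Sneg,
    (fun a b c w => f a b c w || g a b c w) ∈ Sneg := by decide
lemma not_closP : ∀ f ∈ Sneg, (fun a b c w => !(f a b c w)) ∈ Spos := by decide
lemma not_closN : ∀ f ∈ Spos, (fun a b c w => !(f a b c w)) ∈ Sneg := by decide
lemma imp_closP : ∀ f ∈ Sneg, ∀ g ∈ Spos,
    (fun a b c w => !(f a b c w) || g a b c w) ∈ Spos := by decide
lemma imp_closN : ∀ f ∈ Spos, ∀ g ∈ Sneg,
    (fun a b c w => !(f a b c w) || g a b c w) ∈ Sneg := by decide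
lemma box_closP : ∀ f ∈ Spos,
    (fun a b c (w : Fin 3) =>
      if w.val ≤ 1 then f a b c 0 && f a b c 1 && f a b c 2 else f a b c 2) ∈ Spos := by
  decide
lemma box_closN : ∀ f ∈ Sneg,
    (fun a b c (w : Fin 3) =>
      if w.val ≤ 1 then f a b c 0 && f a b c 1 && f a b c 2 else f a b c 2) ∈ Sneg := by
  decide

lemma key (p : ℕ) : ∀ φ : ModalForm,
    (φ.vpos ⊆ {p} → φ.vneg = ∅ → psem φ ∈ Spos) ∧
    (φ.vpos = ∅ → φ.vneg ⊆ {p} → psem φ ∈ Sneg) := by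
  intro φ
  induction φ with
  | var q =>
    constructor
    · intro _ _; exact var_mem
    · intro h _; exact absurd h (by simp [ModalForm.vpos])
  | bot =>
    exact ⟨fun _ _ => bot_memP, fun _ _ => bot_memN⟩
  | and φ ψ ihφ ihψ =>
    constructor
    · intro h1 h2
      simp only [ModalForm.vpos, ModalForm.vneg, Finset.union_subset_iff,
        Finset.union_eq_empty] at h1 h2
      exact and_closP _ (ihφ.1 h1.1 h2.1) _ (ihψ.1 h1.2 h2.2)
    · intro h1 h2
      simp only [ModalForm.vpos, ModalForm.vneg, Finset.union_subset_iff,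
        Finset.union_eq_empty] at h1 h2
      exact and_closN _ (ihφ.2 h1.1 h2.1) _ (ihψ.2 h1.2 h2.2)
  | or φ ψ ihφ ihψ =>
    constructor
    · intro h1 h2
      simp only [ModalForm.vpos, ModalForm.vneg, Finset.union_subset_iff,
        Finset.union_eq_empty] at h1 h2
      exact or_closP _ (ihφ.1 h1.1 h2.1) _ (ihψ.1 h1.2 h2.2)
    · intro h1 h2
      simp only [ModalForm.vpos, ModalForm.vneg, Finset.union_subset_iff,
        Finset.union_eq_empty] at h1 h2
      exact or_closN _ (ihφ.2 h1.1 h2.1) _ (ihψ.2 h1.2 h2.2)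
  | not φ ihφ =>
    constructor
    · intro h1 h2
      simp only [ModalForm.vpos, ModalForm.vneg] at h1 h2
      exact not_closP _ (ihφ.2 h2 h1)
    · intro h1 h2
      simp only [ModalForm.vpos, ModalForm.vneg] at h1 h2
      exact not_closN _ (ihφ.1 h2 h1)
  | imp φ ψ ihφ ihψ =>
    constructor
    · intro h1 h2
      simp only [ModalForm.vpos, ModalForm.vneg, Finset.union_subset_iff,
        Finset.union_eq_empty] at h1 h2
      exact imp_closP _ (ihφ.2 h2.1 h1.1) _ (ihψ.1 h1.2 h2.2)
    · intro h1 h2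
      simp only [ModalForm.vpos, ModalForm.vneg, Finset.union_subset_iff,
        Finset.union_eq_empty] at h1 h2
      exact imp_closN _ (ihφ.1 h2.1 h1.1) _ (ihψ.2 h1.2 h2.2)
  | box φ ihφ =>
    constructor
    · intro h1 h2
      simp only [ModalForm.vpos, ModalForm.vneg] at h1 h2
      exact box_closP _ (ihφ.1 h1 h2)
    · intro h1 h2
      simp only [ModalForm.vpos, ModalForm.vneg] at h1 h2
      exact box_closN _ (ihφ.2 h1 h2)

lemma sat_iff (p : ℕ) (V : Fin 3 → ℕ → Prop) (v : Fin 3 → Bool)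
    (hv : ∀ u, v u = true ↔ V u p) :
    ∀ φ : ModalForm, φ.vpos ∪ φ.vneg ⊆ {p} →
      ∀ w : Fin 3, (LS12Frame.toModel V).Sat w φ ↔ psem φ (v 0) (v 1) (v 2) w = true := by
  intro φ
  induction φ with
  | var q =>
    intro h w
    have hq : q = p := by
      have hm : q ∈ ({p} : Finset ℕ) := h (by simp [ModalForm.vpos, ModalForm.vneg])
      simpa using hm
    have hpsem : psem (ModalForm.var q) (v 0) (v 1) (v 2) w = v w := by
      fin_cases w <;> simp [psem]
    rw [hpsem]
    show V w q ↔ v w = true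
    rw [hq]
    exact (hv w).symm
  | bot =>
    intro _ w; simp [KModel.Sat, psem]
  | and φ ψ ihφ ihψ =>
    intro h w
    simp only [ModalForm.vpos, ModalForm.vneg] at h
    have hφ : φ.vpos ∪ φ.vneg ⊆ {p} := fun a ha => h (by
      simp only [Finset.mem_union] at ha ⊢; tauto)
    have hψ : ψ.vpos ∪ ψ.vneg ⊆ {p} := fun a ha => h (by
      simp only [Finset.mem_union] at ha ⊢; tauto)
    simp [KModel.Sat, psem, ihφ hφ w, ihψ hψ w]
  | or φ ψ ihφ ihψ =>
    intro h w
    simp only [ModalForm.vpos, ModalForm.vneg] at h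
    have hφ : φ.vpos ∪ φ.vneg ⊆ {p} := fun a ha => h (by
      simp only [Finset.mem_union] at ha ⊢; tauto)
    have hψ : ψ.vpos ∪ ψ.vneg ⊆ {p} := fun a ha => h (by
      simp only [Finset.mem_union] at ha ⊢; tauto)
    simp [KModel.Sat, psem, ihφ hφ w, ihψ hψ w]
  | not φ ihφ =>
    intro h w
    simp only [ModalForm.vpos, ModalForm.vneg] at h
    have hφ : φ.vpos ∪ φ.vneg ⊆ {p} := fun a ha => h (by
      simp only [Finset.mem_union] at ha ⊢; tauto)
    simp [KModel.Sat, psem, ihφ hφ w]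
  | imp φ ψ ihφ ihψ =>
    intro h w
    simp only [ModalForm.vpos, ModalForm.vneg] at h
    have hφ : φ.vpos ∪ φ.vneg ⊆ {p} := fun a ha => h (by
      simp only [Finset.mem_union] at ha ⊢; tauto)
    have hψ : ψ.vpos ∪ ψ.vneg ⊆ {p} := fun a ha => h (by
      simp only [Finset.mem_union] at ha ⊢; tauto)
    simp [KModel.Sat, psem, ihφ hφ w, ihψ hψ w, imp_iff_not_or, or_comm]
  | box φ ihφ =>
    intro h w
    simp only [ModalForm.vpos, ModalForm.vneg] at h
    have ih := ihφ h
    show (∀ y, (LS12Frame.toModel V).R w y → (LS12Frame.toModel V).Sat y φ) ↔ _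
    by_cases hw : w.val ≤ 1
    · have hall : ∀ y : Fin 3, (LS12Frame.toModel V).R w y := fun y => Or.inr hw
      constructor
      · intro hs
        simp only [psem, hw, if_pos, Bool.and_eq_true]
        exact ⟨⟨(ih 0).mp (hs (0 : Fin 3) (hall 0)), (ih 1).mp (hs (1 : Fin 3) (hall 1))⟩,
          (ih 2).mp (hs (2 : Fin 3) (hall 2))⟩
      · intro hs
        simp only [psem, hw, if_pos, Bool.and_eq_true] at hs
        have hall2 : ∀ y : Fin 3, (LS12Frame.toModel V).Sat y φ := by
          intro y
          fin_cases y
          · exact (ih 0).mpr hs.1.1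
          · exact (ih 1).mpr hs.1.2
          · exact (ih 2).mpr hs.2
        exact fun y _ => hall2 y
    · constructor
      · intro hs
        simp only [psem, if_neg hw]
        exact (ih 2).mp (hs (2 : Fin 3) (Or.inl (by omega : w = 2)))
      · intro hs y hy
        rcases hy with rfl | hy
        · have hw2 : w = 2 := by omega
          simp only [psem, if_neg hw] at hs
          rw [hw2]
          exact (ih 2).mpr hs
        · exact absurd hy hw

lemma cand_vars (p : ℕ) : ∀ ψ ∈ cand p, ψ.vpos ∪ ψ.vneg ⊆ {p} := by
  intro ψ hψ
  simp only [cand, List.mem_cons, List.not_mem_nil, or_false] at hψ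
  rcases hψ with rfl | rfl | rfl | rfl | rfl | rfl | rfl | rfl <;>
    simp [ModalForm.vpos, ModalForm.vneg, ModalForm.dia, ModalForm.top]

theorem stmt18 (p : ℕ) (φ : ModalForm)
    (hpos : φ.vpos ⊆ {p}) (hneg : φ.vneg = ∅) :
    ∃ ψ ∈ ([ModalForm.bot,
            ModalForm.box (ModalForm.var p),
            ModalForm.and (ModalForm.var p) (ModalForm.box (ModalForm.dia (ModalForm.var p))),
            ModalForm.box (ModalForm.dia (ModalForm.var p)),
            ModalForm.var p,
            ModalForm.or (ModalForm.var p) (ModalForm.box (ModalForm.dia (ModalForm.var p))),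
            ModalForm.dia (ModalForm.var p),
            ModalForm.top] : List ModalForm),
      ∀ (V : LS12Frame.W → ℕ → Prop) (w : LS12Frame.W),
        (LS12Frame.toModel V).Sat w (ModalForm.and (φ.imp ψ) (ψ.imp φ)) := by
  classical
  have hmem : psem φ ∈ Spos := (key p φ).1 hpos hneg
  rw [← map_cand p] at hmem
  obtain ⟨ψ, hψc, hpsem⟩ := List.mem_map.mp hmem
  refine ⟨ψ, hψc, ?_⟩
  intro V w
  set v : Fin 3 → Bool := fun u => decide (V u p) with hvdef
  have hv : ∀ u, v u = true ↔ V u p := fun u => by simp [hvdef]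
  have hφv : φ.vpos ∪ φ.vneg ⊆ {p} := by
    rw [hneg]; simpa using hpos
  have h1 := sat_iff p V v hv φ hφv w
  have h2 := sat_iff p V v hv ψ (cand_vars p ψ hψc) w
  rw [hpsem] at h2
  exact ⟨fun hs => h2.mpr (h1.mp hs), fun hs => h1.mpr (h2.mp hs)⟩
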